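/- Let N ≥ 1 be an integer and f a real number with f ≥ 1/N. Then the polynomial ch_N(z) = z^N − f·(z^{N−1} + ⋯ + z + 1) has a real root λ with λ ≥ 1 such that every complex root z of ch_N with z ≠ λ satisfies |z| < λ. In particular this dominant root is unique. -/

import Mathlib

/-- `ch_N(z) = z^N - f·(z^{N-1} + ⋯ + z + 1)`, the characteristic polynomial of the
simple Leslie matrix of order `N` with constant fertility rate `f`, as a function on `ℂ`. -/
noncomputable def chLeslie (N : ℕ) (f : ℝ) (z : ℂ) : ℂ :=
  z ^ N - (f : ℂ) * ∑ j ∈ Finset.range N, z ^ j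

lemma chLeslie_factor {K : Type*} [Field K] (N : ℕ) (c x : K) (hx : x ≠ 0) :
    x ^ N - c * ∑ j ∈ Finset.range N, x ^ j
      = x ^ N * (1 - ∑ j ∈ Finset.range N, c * (x⁻¹) ^ (j + 1)) := by
  rw [mul_sub, mul_one, Finset.mul_sum]
  congr 1
  rw [Finset.mul_sum, ← Finset.sum_range_reflect (fun j => c * x ^ j) N]
  apply Finset.sum_congr rfl
  intro j hj
  have hj' : j + 1 ≤ N := Finset.mem_range.mp hj
  have h1 : x ^ N * (c * (x⁻¹) ^ (j + 1)) = c * (x ^ N / x ^ (j + 1)) := by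
    rw [inv_pow, div_eq_mul_inv]; ring
  rw [h1, div_eq_mul_inv, ← pow_sub₀ x hx hj']
  congr 2
  omega

/-- If `N ≥ 1` and `f ≥ 1/N`, then `ch_N` has a real root `λ ≥ 1` which strictly dominates
in modulus every other complex root; in particular this dominant root is unique. -/
theorem chLeslie_dominant_root (N : ℕ) (hN : 1 ≤ N) (f : ℝ) (hf : 1 / (N : ℝ) ≤ f) :
    ∃ lam : ℝ, 1 ≤ lam ∧ chLeslie N f (lam : ℂ) = 0 ∧
      ∀ z : ℂ, chLeslie N f z = 0 → z ≠ (lam : ℂ) → ‖z‖ < lam := by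
  have hNR : (1 : ℝ) ≤ (N : ℝ) := by exact_mod_cast hN
  have hNpos : (0 : ℝ) < N := lt_of_lt_of_le one_pos hNR
  have hfpos : 0 < f := lt_of_lt_of_le (by positivity) hf
  have hfN : 1 ≤ f * N := by
    rw [div_le_iff₀ hNpos] at hf; linarith
  set φ : ℝ → ℝ := fun x => ∑ j ∈ Finset.range N, f * (x⁻¹) ^ (j + 1) with hφdef
  -- strict antitonicity
  have hanti : StrictAntiOn φ (Set.Ioi 0) := by
    intro x hx y hy hxy
    apply Finset.sum_lt_sum_of_nonempty (Finset.nonempty_range_iff.mpr (by omega))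
    intro j _
    have hyx : y⁻¹ < x⁻¹ := by
      exact inv_strictAnti₀ hx hxy
    have hy0 : (0:ℝ) < y⁻¹ := by
      have : (0:ℝ) < y := hy
      positivity
    exact mul_lt_mul_of_pos_left
      (pow_lt_pow_left₀ hyx hy0.le (by omega)) hfpos
  set M : ℝ := 1 + f * N with hMdef
  have hM1 : (1 : ℝ) ≤ M := by nlinarith
  -- φ 1 = f * N
  have hφ1 : 1 ≤ φ 1 := by
    simp only [hφdef, inv_one, one_pow, mul_one, Finset.sum_const, Finset.card_range,
      nsmul_eq_mul]
    linarith [hfN]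
  -- φ M < 1
  have hφM : φ M < 1 := by
    have hMpos : (0 : ℝ) < M := by linarith
    have hstep : ∀ j ∈ Finset.range N, f * (M⁻¹) ^ (j + 1) ≤ f * M⁻¹ := by
      intro j _
      apply mul_le_mul_of_nonneg_left _ hfpos.le
      exact pow_le_of_le_one (by positivity) (by rw [inv_le_one_iff₀]; right; exact hM1) (by omega)
    calc φ M ≤ ∑ _j ∈ Finset.range N, f * M⁻¹ := Finset.sum_le_sum hstep
      _ = N * (f * M⁻¹) := by simp [Finset.sum_const, Finset.card_range, nsmul_eq_mul]
      _ < 1 := by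
          rw [mul_comm (f:ℝ) M⁻¹, ← mul_assoc, mul_comm ((N:ℝ)) M⁻¹, mul_assoc,
            inv_mul_lt_iff₀ hMpos, hMdef]
          nlinarith
  -- continuity of φ on [1, M]
  have hcont : ContinuousOn φ (Set.Icc 1 M) := by
    apply continuousOn_finset_sum
    intro j _
    apply (continuousOn_const.mul _)
    apply ContinuousOn.pow
    apply ContinuousOn.inv₀ continuousOn_id
    intro x hx
    have : (1:ℝ) ≤ x := hx.1
    intro h; rw [id] at h; linarith
  -- IVT
  have h1mem : (1 : ℝ) ∈ Set.Icc (φ M) (φ 1) := ⟨hφM.le, hφ1⟩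
  obtain ⟨lam, hlamIcc, hφlam⟩ := intermediate_value_Icc' hM1 hcont h1mem
  have hlam1 : (1:ℝ) ≤ lam := hlamIcc.1
  have hlampos : (0:ℝ) < lam := lt_of_lt_of_le one_pos hlam1
  have hlamC : ((lam : ℂ)) ≠ 0 := by exact_mod_cast hlampos.ne'
  -- the sum identity over ℂ for lam
  have hsumlam : ∑ j ∈ Finset.range N, (f:ℂ) * ((lam:ℂ)⁻¹) ^ (j + 1) = 1 := by
    have : ((φ lam : ℝ) : ℂ) = 1 := by rw [hφlam]; norm_num
    rw [← this, hφdef]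
    push_cast
    ring
  refine ⟨lam, hlam1, ?_, ?_⟩
  · rw [chLeslie, chLeslie_factor N (f:ℂ) (lam:ℂ) hlamC, hsumlam]
    simp
  · intro z hz hzne
    have hz0 : z ≠ 0 := by
      intro h
      rw [h, chLeslie] at hz
      have hs : ∑ j ∈ Finset.range N, (0:ℂ) ^ j = 1 := by
        rw [Finset.sum_eq_single 0]
        · simp
        · intro b _ hb; exact zero_pow hb
        · intro h0; exact absurd (Finset.mem_range.mpr (by omega)) h0
      rw [hs, zero_pow (by omega), mul_one, zero_sub, neg_eq_zero] at hz
      exact hfpos.ne' (by exact_mod_cast hz)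
    have hzN : z ^ N ≠ 0 := pow_ne_zero _ hz0
    rw [chLeslie, chLeslie_factor N (f:ℂ) z hz0, mul_eq_zero] at hz
    have hT : ∑ j ∈ Finset.range N, (f:ℂ) * (z⁻¹) ^ (j + 1) = 1 := by
      rcases hz with h | h
      · exact absurd h hzN
      · linear_combination -h
    set r : ℝ := ‖z‖ with hrdef
    have hrpos : 0 < r := by
      rw [hrdef]; exact norm_pos_iff.mpr hz0
    -- real part bound
    have hre : ∀ j ∈ Finset.range N,
        ((f:ℂ) * (z⁻¹) ^ (j + 1)).re ≤ f * (r⁻¹) ^ (j + 1) := by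
      intro j _
      rw [Complex.re_ofReal_mul]
      apply mul_le_mul_of_nonneg_left _ hfpos.le
      calc ((z⁻¹) ^ (j+1)).re ≤ ‖(z⁻¹) ^ (j+1)‖ := Complex.re_le_norm _
        _ = (r⁻¹) ^ (j+1) := by rw [norm_pow, norm_inv, hrdef]
    have hφr : 1 ≤ φ r := by
      have h1 : (1:ℝ) = (∑ j ∈ Finset.range N, (f:ℂ) * (z⁻¹) ^ (j + 1)).re := by
        rw [hT]; norm_num
      rw [h1, Complex.re_sum, hφdef]
      exact Finset.sum_le_sum hre
    have hrle : r ≤ lam := by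
      by_contra hc
      push_neg at hc
      have := hanti (Set.mem_Ioi.mpr hlampos) (Set.mem_Ioi.mpr hrpos) hc
      rw [hφlam] at this
      linarith
    rcases lt_or_eq_of_le hrle with h | h
    · exact h
    · -- equality case: show z = lam, contradiction
      exfalso
      have hφreq : φ r = 1 := by rw [h, hφlam]
      -- per-term equality; in particular for j = 0
      have hterm : ((f:ℂ) * (z⁻¹) ^ (0 + 1)).re = f * (r⁻¹) ^ (0 + 1) := by
        by_contra hne
        have hlt : ((f:ℂ) * (z⁻¹) ^ (0 + 1)).re < f * (r⁻¹) ^ (0 + 1) :=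
          lt_of_le_of_ne (hre 0 (Finset.mem_range.mpr (by omega))) hne
        have hstrict : (∑ j ∈ Finset.range N, (f:ℂ) * (z⁻¹) ^ (j + 1)).re < φ r := by
          rw [Complex.re_sum, hφdef]
          exact Finset.sum_lt_sum hre ⟨0, Finset.mem_range.mpr (by omega), hlt⟩
        rw [hT, hφreq] at hstrict
        norm_num at hstrict
      simp only [pow_one, zero_add, Complex.re_ofReal_mul] at hterm
      have hre1 : (z⁻¹).re = r⁻¹ := by
        have := mul_left_cancel₀ hfpos.ne' hterm
        exact this
      have habs1 : ‖z⁻¹‖ = r⁻¹ := by rw [norm_inv, hrdef]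
      have him : (z⁻¹).im = 0 := by
        have h2 : (z⁻¹).re ^ 2 + (z⁻¹).im ^ 2 = (z⁻¹).re ^ 2 := by
          have := Complex.sq_norm (z⁻¹)
          rw [habs1, ← hre1] at this
          rw [Complex.normSq_apply] at this
          nlinarith [this]
        nlinarith [sq_nonneg (z⁻¹).im]
      have hzinv : z⁻¹ = ((lam⁻¹ : ℝ) : ℂ) := by
        apply Complex.ext
        · rw [hre1, Complex.ofReal_re, h]
        · rw [him, Complex.ofReal_im]
      apply hzne
      have : z = (z⁻¹)⁻¹ := (inv_inv z).symm
      rw [this, hzinv]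
      push_cast
      rw [inv_inv]
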